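/- Let F be constant on the window: if y'(σ) = F + α u(σ) on [t-τ, t], then the functional F_est(t) defined by F_est(t) = -(6/τ³) ∫_0^τ [(τ - 2s) y(t-τ+s) + α s(τ-s) u(t-τ+s)] ds satisfies F_est(t) = F. In particular the estimator is exact and independent of the initial condition y(t-τ). -/

import Mathlib

theorem stmt_3 (F α τ t : ℝ) (hτ : 0 < τ) (u y : ℝ → ℝ)
    (hu : Continuous u) (hy : ContDiff ℝ 1 y)
    (hode : ∀ σ ∈ Set.Icc (t - τ) t, HasDerivAt y (F + α * u σ) σ) :
    -(6 / τ ^ 3) *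
        ∫ s in (0 : ℝ)..τ,
          ((τ - 2 * s) * y (t - τ + s) + α * s * (τ - s) * u (t - τ + s)) = F := by
  have hmem : ∀ s ∈ Set.uIcc (0:ℝ) τ, (t - τ + s) ∈ Set.Icc (t - τ) t := by
    intro s hs
    rw [Set.uIcc_of_le hτ.le] at hs
    exact ⟨by linarith [hs.1], by linarith [hs.2]⟩
  have hderiv : ∀ s ∈ Set.uIcc (0:ℝ) τ,
      HasDerivAt (fun s => s * (τ - s) * y (t - τ + s))
        ((τ - 2*s) * y (t - τ + s) + s * (τ - s) * (F + α * u (t - τ + s))) s := by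
    intro s hs
    have h1 : HasDerivAt (fun s : ℝ => s * (τ - s)) (τ - 2*s) s := by
      have := (hasDerivAt_id s).mul ((hasDerivAt_const s τ).sub (hasDerivAt_id s))
      exact this.congr_deriv (by simp; ring)
    have h2 : HasDerivAt (fun s => y (t - τ + s)) (F + α * u (t - τ + s)) s := by
      have hy' := hode (t - τ + s) (hmem s hs)
      have := hy'.comp s ((hasDerivAt_const s (t - τ)).add (hasDerivAt_id s))
      simpa [Function.comp_def] using this
    have h3 := h1.mul h2
    exact h3
  have hcont : Continuous (fun s : ℝ =>
      (τ - 2*s) * y (t - τ + s) + s * (τ - s) * (F + α * u (t - τ + s))) := by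
    have hyc : Continuous y := hy.continuous
    fun_prop
  have hint := intervalIntegral.integral_eq_sub_of_hasDerivAt hderiv
    (hcont.intervalIntegrable 0 τ)
  have hb : (fun s => s * (τ - s) * y (t - τ + s)) τ
      - (fun s => s * (τ - s) * y (t - τ + s)) 0 = 0 := by simp
  rw [hb] at hint
  have hsplit : ∀ s : ℝ, (τ - 2*s) * y (t - τ + s) + α * s * (τ - s) * u (t - τ + s)
      = ((τ - 2*s) * y (t - τ + s) + s * (τ - s) * (F + α * u (t - τ + s)))
        - F * (τ * s - s^2) := by intro s; ring
  simp_rw [hsplit]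
  have hint2 : IntervalIntegrable (fun s : ℝ => F * (τ * s - s^2)) MeasureTheory.volume 0 τ :=
    (Continuous.intervalIntegrable (by fun_prop) 0 τ)
  rw [intervalIntegral.integral_sub (hcont.intervalIntegrable 0 τ) hint2, hint]
  have hpoly : (∫ s in (0:ℝ)..τ, F * (τ * s - s^2)) = F * (τ^3 / 6) := by
    rw [intervalIntegral.integral_const_mul]
    have : (∫ s in (0:ℝ)..τ, (τ * s - s^2))
        = (∫ s in (0:ℝ)..τ, τ * s) - ∫ s in (0:ℝ)..τ, s^2 := by
      exact intervalIntegral.integral_sub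
        (Continuous.intervalIntegrable (by fun_prop) 0 τ)
        (Continuous.intervalIntegrable (by fun_prop) 0 τ)
    rw [this, intervalIntegral.integral_const_mul, integral_id, integral_pow]
    ring
  rw [hpoly]
  have hτ' : τ ≠ 0 := hτ.ne'
  field_simp
  ring
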